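/- Let N be a zero-symmetric unital right near-ring. The following are equivalent: (1) N is left strongly regular; (2) N is regular and reduced; (3) N is regular and every idempotent of N is central. -/

import Mathlib

/-- A zero-symmetric unital right near-ring: an additive group (not necessarily
abelian) and a multiplicative monoid with `1 ≠ 0`, satisfying the right
distributive law, and zero-symmetric (`x * 0 = 0`). -/
class ZSNearRing (N : Type*) extends AddGroup N, Monoid N where
  right_distrib : ∀ x y z : N, (x + y) * z = x * z + y * z
  mul_zero : ∀ x : N, x * 0 = 0
  one_ne_zero : (1 : N) ≠ (0 : N)

namespace ZSNearRing

variable {N : Type*} [ZSNearRing N]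

/-- The set `Na = {n·a : n ∈ N}`. -/
def NSet (a : N) : Set N := {x | ∃ n : N, x = n * a}

/-- The left annihilator `(0 :ₗ a) = {x ∈ N : x·a = 0}`. -/
def lAnn (a : N) : Set N := {x | x * a = 0}

/-- `a` is left morphic if there is `b` with `Na = (0 :ₗ b)` and `Nb = (0 :ₗ a)`. -/
def IsLeftMorphic (a : N) : Prop := ∃ b : N, NSet a = lAnn b ∧ NSet b = lAnn a

end ZSNearRing

open ZSNearRing

section Aux

variable {N : Type*} [ZSNearRing N]

lemma zsnr_zero_mul (b : N) : (0 : N) * b = 0 := by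
  have h := ZSNearRing.right_distrib (0 : N) 0 b
  rw [add_zero] at h
  exact right_eq_add.mp h

lemma zsnr_neg_mul (a b : N) : (-a) * b = -(a * b) := by
  have h := ZSNearRing.right_distrib a (-a) b
  rw [add_neg_cancel, zsnr_zero_mul] at h
  exact (neg_eq_of_add_eq_zero_right h.symm).symm

lemma zsnr_sub_mul (a b c : N) : (a - b) * c = a * c - b * c := by
  rw [sub_eq_add_neg, ZSNearRing.right_distrib, zsnr_neg_mul, ← sub_eq_add_neg]

lemma zsnr_comm_zero (hsq : ∀ a : N, a * a = 0 → a = 0) {a b : N}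
    (hab : a * b = 0) : b * a = 0 := by
  apply hsq
  have : b * a * (b * a) = b * (a * b) * a := by simp [mul_assoc]
  rw [this, hab, ZSNearRing.mul_zero, zsnr_zero_mul]

lemma zsnr_mid (hsq : ∀ a : N, a * a = 0 → a = 0) {a b : N} (x : N)
    (hab : a * b = 0) : a * x * b = 0 := by
  have hba := zsnr_comm_zero hsq hab
  apply hsq
  have : a * x * b * (a * x * b) = a * x * (b * a) * x * b := by simp [mul_assoc]
  rw [this, hba, ZSNearRing.mul_zero, zsnr_zero_mul, zsnr_zero_mul]

lemma zsnr_exe (hsq : ∀ a : N, a * a = 0 → a = 0) {e : N} (he : e * e = e)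
    (x : N) : e * x = e * x * e := by
  set t := e * x - e * x * e with ht
  have hte : t * e = 0 := by
    rw [ht, zsnr_sub_mul, mul_assoc (e * x) e e, he, sub_self]
  have het : e * t = 0 := zsnr_comm_zero hsq hte
  have htt : t * t = 0 := by
    rw [ht, zsnr_sub_mul]
    have h1 : e * x * t = 0 := zsnr_mid hsq x het
    have h2 : e * x * e * t = 0 := by
      rw [mul_assoc (e * x) e t, het, ZSNearRing.mul_zero]
    rw [← ht, h1, h2, sub_self]
  have h := hsq t htt
  rw [ht] at h
  exact sub_eq_zero.mp h

lemma zsnr_sub_idem_mul (hsq : ∀ a : N, a * a = 0 → a = 0) {e : N}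
    (he : e * e = e) : (1 - e) * e = 0 := by
  rw [zsnr_sub_mul, one_mul, he, sub_self]

lemma zsnr_one_sub_idem (hsq : ∀ a : N, a * a = 0 → a = 0) {e : N}
    (he : e * e = e) : (1 - e) * (1 - e) = (1 - e) := by
  have h0 : e * (1 - e) = 0 := by
    rw [zsnr_exe hsq he (1 - e), mul_assoc, zsnr_sub_idem_mul hsq he,
      ZSNearRing.mul_zero]
  rw [zsnr_sub_mul, one_mul, h0, sub_zero]

lemma zsnr_xe (hsq : ∀ a : N, a * a = 0 → a = 0) {e : N} (he : e * e = e)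
    (x : N) : x * e = e * x * e := by
  have hh := zsnr_one_sub_idem hsq he
  have h1 := zsnr_exe hsq hh x
  have h2 : (1 - e) * x * e = 0 := by
    rw [h1, mul_assoc ((1 - e) * x) (1 - e) e, zsnr_sub_idem_mul hsq he,
      ZSNearRing.mul_zero]
  rw [zsnr_sub_mul, one_mul, zsnr_sub_mul] at h2
  -- h2 : x * e - e * x * e = 0  (after grouping)
  exact sub_eq_zero.mp h2

end Aux

theorem stmt6 {N : Type*} [ZSNearRing N] :
    List.TFAE [
      ∀ a : N, ∃ x : N, a = x * (a * a),
      (∀ a : N, ∃ x : N, a = a * x * a) ∧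
        (∀ a : N, ∀ n : ℕ, 1 ≤ n → a ^ n = 0 → a = 0),
      (∀ a : N, ∃ x : N, a = a * x * a) ∧
        (∀ e : N, e * e = e → ∀ x : N, e * x = x * e)] := by
  tfae_have 1 → 2 := by
    intro h
    have hsq : ∀ a : N, a * a = 0 → a = 0 := by
      intro a ha
      obtain ⟨x, hx⟩ := h a
      rw [hx, ha, ZSNearRing.mul_zero]
    constructor
    · intro a
      obtain ⟨x, hx⟩ := h a
      have h4 : a * x * a * a = a * a := by rw [mul_assoc, mul_assoc, ← hx]
      have hta : (a - a * x * a) * a = 0 := by rw [zsnr_sub_mul, h4, sub_self]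
      have hat : a * (a - a * x * a) = 0 := zsnr_comm_zero hsq hta
      have htt : (a - a * x * a) * (a - a * x * a) = 0 := by
        rw [zsnr_sub_mul, hat, mul_assoc (a * x) a _, hat, ZSNearRing.mul_zero,
          sub_self]
      exact ⟨x, sub_eq_zero.mp (hsq _ htt)⟩
    · intro a n
      induction n using Nat.strong_induction_on generalizing a with
      | _ n ih =>
        intro hn han
        rcases Nat.lt_or_ge n 2 with h2 | h2
        · interval_cases n
          simpa using han
        · have key : a ^ (n - 1) * a ^ (n - 1) = 0 := by
            rw [← pow_add]
            have he : (n - 1) + (n - 1) = n + (n - 2) := by omega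
            rw [he, pow_add, han, zsnr_zero_mul]
          exact ih (n - 1) (by omega) a (by omega) (hsq _ key)
  tfae_have 2 → 3 := by
    rintro ⟨hreg, hred⟩
    refine ⟨hreg, ?_⟩
    have hsq : ∀ a : N, a * a = 0 → a = 0 := fun a ha =>
      hred a 2 (by norm_num) (by rw [pow_two, ha])
    intro e he x
    rw [zsnr_exe hsq he x, ← zsnr_xe hsq he x]
  tfae_have 3 → 1 := by
    rintro ⟨hreg, hc⟩ a
    obtain ⟨x, hx⟩ := hreg a
    have he : (x * a) * (x * a) = x * a := by
      conv_lhs => rw [mul_assoc, ← mul_assoc a x a, ← hx]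
    refine ⟨x, ?_⟩
    calc a = a * x * a := hx
      _ = a * (x * a) := by rw [mul_assoc]
      _ = (x * a) * a := (hc (x * a) he a).symm
      _ = x * (a * a) := by rw [mul_assoc]
  tfae_finish
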